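/- For all n in [1,infinity] and p in (0, p_c^*], the two-point connectivity functions satisfy tau_p(x) <= tau_{p,n}(x) <= p^{-c_2} tau_p(x) for a suitable constant c_2, where tau_{p,n}(x) is the probability that the origin and x lie in the same open *-cluster at time n. -/

import Mathlib

open MeasureTheory Filter Set

/-- Sites of the lattice `ℤ²`. -/
abbrev Site : Type := ℤ × ℤ

/-- A configuration of open (`true`, i.e. `1`) and closed (`false`, i.e. `0`) sites. -/
abbrev Config : Type := Site → Bool

/-- Nearest-neighbour adjacency in `ℤ²`. -/
def adj (x y : Site) : Prop := (x.1 - y.1).natAbs + (x.2 - y.2).natAbs = 1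

/-- `*`-adjacency: adjacency in the close-packed lattice `ℤ²_cp`. -/
def adjStar (x y : Site) : Prop :=
  x ≠ y ∧ (x.1 - y.1).natAbs ≤ 1 ∧ (x.2 - y.2).natAbs ≤ 1

/-- The four nearest neighbours of a site. -/
def nbrs (x : Site) : Finset Site :=
  {(x.1 + 1, x.2), (x.1 - 1, x.2), (x.1, x.2 + 1), (x.1, x.2 - 1)}

/-- One step of the bootstrap dynamics: a closed site with at least three open
nearest neighbours becomes open; open sites are stable. -/
def step (ω : Config) : Config := fun x =>
  ω x || decide (3 ≤ ((nbrs x).filter fun y => ω y = true).card)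

/-- The configuration after `n` updates (`evolve ω 0 = ω`). -/
def evolve (ω : Config) : ℕ → Config
  | 0 => ω
  | n + 1 => step (evolve ω n)

/-- The site `x` is open in the final (limiting) configuration `ω̄`. -/
def finalOpen (ω : Config) (x : Site) : Prop := ∃ n, evolve ω n x = true

/-- A closed site `x` is stable iff it stays closed at all times, i.e. it is
closed in the final configuration `ω̄`. -/
def stableClosed (ω : Config) (x : Site) : Prop := ∀ n, evolve ω n x = false

/-- A self-avoiding path (with respect to an adjacency relation `A`) all of whose
sites lie in the set `S`. -/
def IsPathIn (S : Set Site) (A : Site → Site → Prop) (k : ℕ) (π : Fin (k + 1) → Site) : Prop :=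
  Function.Injective π ∧ (∀ i : Fin k, A (π i.castSucc) (π i.succ)) ∧ ∀ i, π i ∈ S

/-- `x` and `y` are joined by a path in `S` for the adjacency relation `A`. -/
def ConnIn (S : Set Site) (A : Site → Site → Prop) (x y : Site) : Prop :=
  ∃ (k : ℕ) (π : Fin (k + 1) → Site),
    π 0 = x ∧ π (Fin.last k) = y ∧ IsPathIn S A k π

/-- The plaquette (unit square of four sites) with lower-left corner `c`. -/
def plaq (c : Site) : Finset Site :=
  {c, (c.1 + 1, c.2), (c.1, c.2 + 1), (c.1 + 1, c.2 + 1)}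

/-- A site is protected if it is closed and belongs to a plaquette of closed sites. -/
def IsProtected (ω : Config) (x : Site) : Prop :=
  ω x = false ∧ ∃ c : Site, x ∈ plaq c ∧ ∀ y ∈ plaq c, ω y = false

/-- The partial cluster `C_{(x,x')}`: sites reachable from `x'` by a self-avoiding
`ℤ²`-path whose first step avoids `x` and whose sites all have the state of `x'`. -/
def partialCluster (ω : Config) (x x' : Site) : Set Site :=
  {y | ∃ (k : ℕ) (π : Fin (k + 1) → Site),
    π 0 = x' ∧ π (Fin.last k) = y ∧ Function.Injective π ∧
    (∀ i : Fin k, adj (π i.castSucc) (π i.succ)) ∧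
    (∀ i, ω (π i) = ω x') ∧ ∀ i : Fin (k + 1), (i : ℕ) = 1 → π i ≠ x}

/-- `μ` is the Bernoulli product measure with density `p` of open sites:
all finite-dimensional marginals are products of Bernoulli(`p`) laws. -/
def IsBernoulli (p : ℝ) (μ : Measure Config) : Prop :=
  ∀ (s : Finset Site) (η : Site → Bool),
    μ {ω : Config | ∀ x ∈ s, ω x = η x} =
      ∏ x ∈ s, ENNReal.ofReal (if η x then p else 1 - p)

/-- `x` belongs to an infinite cluster of `S` for the adjacency relation `A`. -/
def InfClusterIn (S : Set Site) (A : Site → Site → Prop) (x : Site) : Prop :=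
  x ∈ S ∧ {y | ConnIn S A x y}.Infinite

/-- The critical probability `p_c` of independent site percolation on `ℤ²`. -/
noncomputable def pc : ℝ :=
  sInf {p : ℝ | p ∈ Set.Icc (0 : ℝ) 1 ∧
    ∀ μ : Measure Config, IsProbabilityMeasure μ → IsBernoulli p μ →
      0 < μ {ω : Config | ∃ x : Site, InfClusterIn {z | ω z = true} adj x}}

--基本 lemmas
instance adjStar.dec (x y : Site) : Decidable (adjStar x y) := by
  unfold adjStar; exact inferInstance

lemma adjStar_symm {a b : Site} (h : adjStar a b) : adjStar b a := by
  obtain ⟨h1, h2, h3⟩ := h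
  exact ⟨fun e => h1 e.symm, by omega, by omega⟩

lemma adjStar_add {y a b : Site} (h : adjStar a b) : adjStar (y + a) (y + b) := by
  obtain ⟨h1, h2, h3⟩ := h
  refine ⟨fun e => h1 (by simpa using e), ?_, ?_⟩
  · simpa [Prod.fst_add, add_sub_add_left_eq_sub] using h2
  · simpa [Prod.snd_add, add_sub_add_left_eq_sub] using h3

lemma mem_nbrs_iff {y u : Site} : u ∈ nbrs y ↔
    u = (y.1 + 1, y.2) ∨ u = (y.1 - 1, y.2) ∨ u = (y.1, y.2 + 1) ∨ u = (y.1, y.2 - 1) := by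
  simp [nbrs]

lemma adjStar_of_mem_nbrs {y u : Site} (h : u ∈ nbrs y) : adjStar y u := by
  rw [mem_nbrs_iff] at h
  rcases h with h | h | h | h <;> subst h <;>
    refine ⟨?_, ?_, ?_⟩ <;> simp [Prod.ext_iff] <;> try omega

-- evolve monotonicity
lemma step_mono {ω ω' : Config} (h : ∀ z, ω z = true → ω' z = true) :
    ∀ z, step ω z = true → step ω' z = true := by
  intro z hz
  rw [step, Bool.or_eq_true] at hz ⊢
  rcases hz with hz | hz
  · exact Or.inl (h z hz)
  · refine Or.inr ?_
    rw [decide_eq_true_eq] at hz ⊢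
    refine le_trans hz (Finset.card_le_card ?_)
    intro a ha
    rw [Finset.mem_filter] at ha ⊢
    exact ⟨ha.1, h a ha.2⟩

lemma evolve_mono {ω ω' : Config} (h : ∀ z, ω z = true → ω' z = true) :
    ∀ n z, evolve ω n z = true → evolve ω' n z = true := by
  intro n
  induction n with
  | zero => exact h
  | succ n ih => exact step_mono ih

lemma step_ge {ω : Config} {z : Site} (h : ω z = true) : step ω z = true := by
  rw [step, h, Bool.true_or]

lemma evolve_ge {ω : Config} {z : Site} (h : ω z = true) : ∀ n, evolve ω n z = true := by
  intro n; induction n with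
  | zero => exact h
  | succ n ih => exact step_ge ih

lemma evolve_le_evolve {ω : Config} {z : Site} {m n : ℕ} (hmn : m ≤ n)
    (h : evolve ω m z = true) : evolve ω n z = true := by
  obtain ⟨k, rfl⟩ := Nat.exists_eq_add_of_le hmn
  clear hmn
  induction k with
  | zero => exact h
  | succ k ih => exact step_ge ih
-- at most one closed neighbour
def AMOC (ω : Config) (y : Site) : Prop :=
  ∀ u ∈ nbrs y, ∀ v ∈ nbrs y, ω u = false → ω v = false → u = v

lemma new_site_card {ω : Config} {y : Site} (hc : ω y = false) (hs : step ω y = true) :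
    3 ≤ ((nbrs y).filter fun z => ω z = true).card := by
  rw [step, hc, Bool.false_or, decide_eq_true_eq] at hs
  exact hs

lemma amoc_of_new {ω : Config} {y : Site} (hc : ω y = false) (hs : step ω y = true) :
    AMOC ω y := by
  intro u hu v hv hou hov
  by_contra hne
  have h3 := new_site_card hc hs
  have hsub : ((nbrs y).filter fun z => ω z = true) ⊆ ((nbrs y).erase u).erase v := by
    intro a ha
    rw [Finset.mem_filter] at ha
    refine Finset.mem_erase.2 ⟨?_, Finset.mem_erase.2 ⟨?_, ha.1⟩⟩
    · rintro rfl; rw [ha.2] at hov; exact absurd hov (by simp)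
    · rintro rfl; rw [ha.2] at hou; exact absurd hou (by simp)
  have hcard : (((nbrs y).erase u).erase v).card ≤ 2 := by
    have h4 : (nbrs y).card ≤ 4 := by
      refine le_trans (Finset.card_insert_le _ _) ?_
      refine Nat.succ_le_succ (le_trans (Finset.card_insert_le _ _) ?_)
      refine Nat.succ_le_succ (le_trans (Finset.card_insert_le _ _) ?_)
      exact Nat.succ_le_succ (Finset.card_singleton _).le
    have hv' : v ∈ (nbrs y).erase u := Finset.mem_erase.2 ⟨fun e => hne (e ▸ rfl), hv⟩
    rw [Finset.card_erase_of_mem hv', Finset.card_erase_of_mem hu]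
    omega
  have := le_trans h3 (le_trans (Finset.card_le_card hsub) hcard)
  omega
lemma exists_open_nbr {ω : Config} {y : Site} (hc : ω y = false) (hs : step ω y = true) :
    ∃ r, r ∈ nbrs y ∧ ω r = true := by
  have h3 := new_site_card hc hs
  have hne : ((nbrs y).filter fun z => ω z = true).Nonempty := Finset.card_pos.1 (by omega)
  obtain ⟨r, hr⟩ := hne
  rw [Finset.mem_filter] at hr
  exact ⟨r, hr.1, hr.2⟩

lemma two_nbrs {ω : Config} {y u v : Site} (h : AMOC ω y) (hu : u ∈ nbrs y)
    (hv : v ∈ nbrs y) (hne : u ≠ v) (hcu : ω u = false) : ω v = true := by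
  cases hvv : ω v with
  | true => rfl
  | false => exact absurd (h u hu v hv hcu hvv) hne

lemma adjStar_iff' (a b : Site) : adjStar a b ↔
    ((a.1 ≠ b.1 ∨ a.2 ≠ b.2) ∧ (a.1 - b.1).natAbs ≤ 1 ∧ (a.2 - b.2).natAbs ≤ 1) := by
  unfold adjStar
  rw [ne_eq, Prod.ext_iff]
  tauto

lemma L2 {ω : Config} {y1 y2 : Site} (h1 : ω y1 = false) (h2 : ω y2 = false)
    (hs1 : step ω y1 = true) (hs2 : step ω y2 = true) (hadj : adjStar y1 y2) :
    ∃ s, ω s = true ∧ adjStar y1 s ∧ adjStar y2 s := by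
  have A1 := amoc_of_new h1 hs1
  obtain ⟨hne0, ha1, ha2⟩ := hadj
  have hne : y2.1 ≠ y1.1 ∨ y2.2 ≠ y1.2 := by
    by_contra hc; push_neg at hc
    exact hne0 (Prod.ext_iff.2 ⟨hc.1.symm, hc.2.symm⟩)
  have e1 : y2.1 = y1.1 - 1 ∨ y2.1 = y1.1 ∨ y2.1 = y1.1 + 1 := by omega
  have e2 : y2.2 = y1.2 - 1 ∨ y2.2 = y1.2 ∨ y2.2 = y1.2 + 1 := by omega
  -- horizontal-neighbour case
  have hor : y2.2 = y1.2 → y2.1 ≠ y1.1 → ∃ s, ω s = true ∧ adjStar y1 s ∧ adjStar y2 s := by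
    intro hv hh
    refine ⟨(y1.1, y1.2 + 1), ?_, ?_, ?_⟩
    · refine two_nbrs A1 (u := y2) ?_ ?_ ?_ h2
      · rw [mem_nbrs_iff]
        rcases e1 with h | h | h
        · right; left; exact Prod.ext_iff.2 ⟨h, hv⟩
        · exact absurd h hh
        · left; exact Prod.ext_iff.2 ⟨h, hv⟩
      · rw [mem_nbrs_iff]; right; right; left; rfl
      · rw [ne_eq, Prod.ext_iff]; simp; omega
    · rw [adjStar_iff']; refine ⟨?_, ?_, ?_⟩ <;> simp <;> omega
    · rw [adjStar_iff']; refine ⟨?_, ?_, ?_⟩ <;> simp <;> omega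
  -- vertical-neighbour case
  have ver : y2.1 = y1.1 → y2.2 ≠ y1.2 → ∃ s, ω s = true ∧ adjStar y1 s ∧ adjStar y2 s := by
    intro hv hh
    refine ⟨(y1.1 + 1, y1.2), ?_, ?_, ?_⟩
    · refine two_nbrs A1 (u := y2) ?_ ?_ ?_ h2
      · rw [mem_nbrs_iff]
        rcases e2 with h | h | h
        · right; right; right; exact Prod.ext_iff.2 ⟨hv, h⟩
        · exact absurd h hh
        · right; right; left; exact Prod.ext_iff.2 ⟨hv, h⟩
      · rw [mem_nbrs_iff]; left; rfl
      · rw [ne_eq, Prod.ext_iff]; simp; omega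
    · rw [adjStar_iff']; refine ⟨?_, ?_, ?_⟩ <;> simp <;> omega
    · rw [adjStar_iff']; refine ⟨?_, ?_, ?_⟩ <;> simp <;> omega
  -- diagonal case
  have diag : y2.1 ≠ y1.1 → y2.2 ≠ y1.2 → ∃ s, ω s = true ∧ adjStar y1 s ∧ adjStar y2 s := by
    intro hh hv
    -- candidates (y1.1 + d1, y1.2) and (y1.1, y1.2 + d2) where d = y2 - y1
    cases hu : ω (y2.1, y1.2) with
    | true =>
      refine ⟨(y2.1, y1.2), hu, ?_, ?_⟩
      · rw [adjStar_iff']; refine ⟨?_, ?_, ?_⟩ <;> simp <;> omega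
      · rw [adjStar_iff']; refine ⟨?_, ?_, ?_⟩ <;> simp <;> omega
    | false =>
      have hmem1 : ((y2.1 : ℤ), y1.2) ∈ nbrs y1 := by
        rw [mem_nbrs_iff]
        rcases e1 with h | h | h
        · right; left; exact Prod.ext_iff.2 ⟨h, rfl⟩
        · exact absurd h hh
        · left; exact Prod.ext_iff.2 ⟨h, rfl⟩
      have hmem2 : ((y1.1 : ℤ), y2.2) ∈ nbrs y1 := by
        rw [mem_nbrs_iff]
        rcases e2 with h | h | h
        · right; right; right; exact Prod.ext_iff.2 ⟨rfl, h⟩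
        · exact absurd h hv
        · right; right; left; exact Prod.ext_iff.2 ⟨rfl, h⟩
      have hopen : ω (y1.1, y2.2) = true := by
        refine two_nbrs A1 hmem1 hmem2 ?_ hu
        rw [ne_eq, Prod.ext_iff]; simp; omega
      refine ⟨(y1.1, y2.2), hopen, ?_, ?_⟩
      · rw [adjStar_iff']; refine ⟨?_, ?_, ?_⟩ <;> simp <;> omega
      · rw [adjStar_iff']; refine ⟨?_, ?_, ?_⟩ <;> simp <;> omega
  by_cases hh : y2.1 = y1.1
  · exact ver hh (by tauto)
  · by_cases hv : y2.2 = y1.2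
    · exact hor hv hh
    · exact diag hh hv
-- Finite reachability machinery on the 8 neighbours
def off : Fin 8 → Site
  | 0 => (1,0) | 1 => (-1,0) | 2 => (0,1) | 3 => (0,-1)
  | 4 => (1,1) | 5 => (1,-1) | 6 => (-1,1) | 7 => (-1,-1)

def adj8 (i j : Fin 8) : Bool := decide (adjStar (off i) (off j))

def step8 (f s : Fin 8 → Bool) : Fin 8 → Bool :=
  fun j => s j || (f j && decide (∃ i, s i = true ∧ adj8 i j = true))

def reach8 (f : Fin 8 → Bool) (i j : Fin 8) : Bool :=
  (step8 f)^[8] (fun j' => decide (j' = i)) j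

def emb (i : Fin 4) : Fin 8 := ⟨i.val, by omega⟩

def mk8 (b0 b1 b2 b3 b4 b5 b6 b7 : Bool) : Fin 8 → Bool
  | 0 => b0 | 1 => b1 | 2 => b2 | 3 => b3 | 4 => b4 | 5 => b5 | 6 => b6 | 7 => b7

theorem mk8_eta (f : Fin 8 → Bool) :
    mk8 (f 0) (f 1) (f 2) (f 3) (f 4) (f 5) (f 6) (f 7) = f := by
  funext i
  match i with
  | 0 => rfl | 1 => rfl | 2 => rfl | 3 => rfl | 4 => rfl | 5 => rfl | 6 => rfl | 7 => rfl

set_option maxHeartbeats 4000000 in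
set_option maxRecDepth 100000 in
theorem key8' : ∀ b0 b1 b2 b3 b4 b5 b6 b7 : Bool,
    (∀ i j : Fin 4, mk8 b0 b1 b2 b3 b4 b5 b6 b7 (emb i) = false →
      mk8 b0 b1 b2 b3 b4 b5 b6 b7 (emb j) = false → i = j) →
    ∀ i j : Fin 8, mk8 b0 b1 b2 b3 b4 b5 b6 b7 i = true →
      mk8 b0 b1 b2 b3 b4 b5 b6 b7 j = true →
      reach8 (mk8 b0 b1 b2 b3 b4 b5 b6 b7) i j = true := by
  decide

theorem key8 (f : Fin 8 → Bool)
    (h : ∀ i j : Fin 4, f (emb i) = false → f (emb j) = false → i = j)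
    (i j : Fin 8) (hi : f i = true) (hj : f j = true) : reach8 f i j = true := by
  have := key8' (f 0) (f 1) (f 2) (f 3) (f 4) (f 5) (f 6) (f 7)
  rw [mk8_eta] at this
  exact this h i j hi hj

/-- relation on `Fin 8`: step to an `f`-true `*`-adjacent index. -/
def R8 (f : Fin 8 → Bool) (i j : Fin 8) : Prop := adj8 i j = true ∧ f j = true

lemma iter_sound (f : Fin 8 → Bool) (i : Fin 8) :
    ∀ (k : ℕ) (s : Fin 8 → Bool),
      (∀ j, s j = true → Relation.ReflTransGen (R8 f) i j) →
      ∀ j, ((step8 f)^[k] s) j = true → Relation.ReflTransGen (R8 f) i j := by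
  intro k
  induction k with
  | zero => intro s hs j hj; exact hs j hj
  | succ k ih =>
    intro s hs j hj
    rw [Function.iterate_succ_apply] at hj
    refine ih (step8 f s) ?_ j hj
    intro j' hj'
    simp only [step8, Bool.or_eq_true, Bool.and_eq_true, decide_eq_true_eq] at hj'
    rcases hj' with hj' | ⟨hfj', i', hsi', hadj⟩
    · exact hs j' hj'
    · exact Relation.ReflTransGen.tail (hs i' hsi') ⟨hadj, hfj'⟩

lemma reach8_sound (f : Fin 8 → Bool) (i j : Fin 8) (h : reach8 f i j = true) :
    Relation.ReflTransGen (R8 f) i j := by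
  refine iter_sound f i 8 _ ?_ j h
  intro j' hj'
  rw [decide_eq_true_eq] at hj'
  subst hj'
  exact Relation.ReflTransGen.refl
/-- walk relation in a set of sites: a `*`-step whose target lies in the set. -/
def SRel (S : Set Site) (u v : Site) : Prop := adjStar u v ∧ v ∈ S

def Opn (ω : Config) : Set Site := {z | ω z = true}

lemma exists_off {y u : Site} (h : adjStar y u) : ∃ i : Fin 8, y + off i = u := by
  rw [adjStar_iff'] at h
  obtain ⟨hne, h1, h2⟩ := h
  have e1 : u.1 = y.1 - 1 ∨ u.1 = y.1 ∨ u.1 = y.1 + 1 := by omega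
  have e2 : u.2 = y.2 - 1 ∨ u.2 = y.2 ∨ u.2 = y.2 + 1 := by omega
  have hu : u = (u.1, u.2) := rfl
  rcases e1 with h1' | h1' | h1' <;> rcases e2 with h2' | h2' | h2'
  · exact ⟨7, by rw [hu]; exact Prod.ext_iff.2 ⟨by simp [off]; omega, by simp [off]; omega⟩⟩
  · exact ⟨1, by rw [hu]; exact Prod.ext_iff.2 ⟨by simp [off]; omega, by simp [off]; omega⟩⟩
  · exact ⟨6, by rw [hu]; exact Prod.ext_iff.2 ⟨by simp [off]; omega, by simp [off]; omega⟩⟩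
  · exact ⟨3, by rw [hu]; exact Prod.ext_iff.2 ⟨by simp [off]; omega, by simp [off]; omega⟩⟩
  · exact absurd h1'.symm (by omega)
  · exact ⟨2, by rw [hu]; exact Prod.ext_iff.2 ⟨by simp [off]; omega, by simp [off]; omega⟩⟩
  · exact ⟨5, by rw [hu]; exact Prod.ext_iff.2 ⟨by simp [off]; omega, by simp [off]; omega⟩⟩
  · exact ⟨0, by rw [hu]; exact Prod.ext_iff.2 ⟨by simp [off]; omega, by simp [off]; omega⟩⟩
  · exact ⟨4, by rw [hu]; exact Prod.ext_iff.2 ⟨by simp [off]; omega, by simp [off]; omega⟩⟩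

lemma off_emb_mem (y : Site) (i : Fin 4) : y + off (emb i) ∈ nbrs y := by
  fin_cases i <;> rw [mem_nbrs_iff] <;>
    [left; (right; left); (right; right; left); (right; right; right)] <;>
    exact Prod.ext_iff.2 ⟨by simp [off, emb]; try omega, by simp [off, emb]; try omega⟩

lemma off_inj : Function.Injective off := by decide

lemma L1 {ω : Config} {y u w : Site} (hA : AMOC ω y)
    (hu : adjStar y u) (hw : adjStar y w) (ou : ω u = true) (ow : ω w = true) :
    Relation.ReflTransGen (SRel (Opn ω)) u w := by
  classical
  set f : Fin 8 → Bool := fun i => ω (y + off i) with hf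
  obtain ⟨iu, hiu⟩ := exists_off hu
  obtain ⟨iw, hiw⟩ := exists_off hw
  have hyp : ∀ i j : Fin 4, f (emb i) = false → f (emb j) = false → i = j := by
    intro i j hi hj
    have := hA _ (off_emb_mem y i) _ (off_emb_mem y j) hi hj
    have h2 : off (emb i) = off (emb j) := add_left_cancel this
    have h3 : emb i = emb j := off_inj h2
    exact Fin.ext (by simpa [emb] using congrArg Fin.val h3)
  have hr := key8 f hyp iu iw (by rw [hf]; simpa [hiu] using ou) (by rw [hf]; simpa [hiw] using ow)
  have hrtg := reach8_sound f iu iw hr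
  have hlift : Relation.ReflTransGen (SRel (Opn ω)) (y + off iu) (y + off iw) := by
    refine Relation.ReflTransGen.lift (fun i => y + off i) ?_ _ _ hrtg
    intro a b hab
    obtain ⟨hadj, hfb⟩ := hab
    rw [adj8, decide_eq_true_eq] at hadj
    exact ⟨adjStar_add hadj, hfb⟩
  rwa [hiu, hiw] at hlift
/-- `r` is an ω-open representative of `z`. -/
def Good (ω : Config) (z r : Site) : Prop :=
  ω r = true ∧ (z = r ∨ (ω z = false ∧ step ω z = true ∧ adjStar z r))

lemma good_self {ω : Config} {z : Site} (h : ω z = true) : Good ω z z := ⟨h, Or.inl rfl⟩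

lemma exists_good {ω : Config} {z : Site} (h : step ω z = true) : ∃ r, Good ω z r := by
  cases hz : ω z with
  | true => exact ⟨z, good_self hz⟩
  | false =>
    obtain ⟨r, hr, hor⟩ := exists_open_nbr hz h
    exact ⟨r, hor, Or.inr ⟨hz, h, adjStar_of_mem_nbrs hr⟩⟩

lemma good_step_open {ω : Config} {z r : Site} (h : Good ω z r) : step ω z = true := by
  rcases h.2 with rfl | ⟨_, hs, _⟩
  · exact step_ge h.1
  · exact hs

/-- two representatives of the same site are connected. -/
lemma good_conn {ω : Config} {z ra rb : Site} (ha : Good ω z ra) (hb : Good ω z rb) :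
    Relation.ReflTransGen (SRel (Opn ω)) ra rb := by
  obtain ⟨hoa, ha2⟩ := ha
  obtain ⟨hob, hb2⟩ := hb
  rcases ha2 with rfl | ⟨hc, hs, haa⟩
  · rcases hb2 with rfl | ⟨hc, hs, hbb⟩
    · exact Relation.ReflTransGen.refl
    · rw [hoa] at hc; exact absurd hc (by simp)
  · rcases hb2 with rfl | ⟨hc', hs', hbb⟩
    · rw [hob] at hc; exact absurd hc (by simp)
    · exact L1 (amoc_of_new hc hs) haa hbb hoa hob

/-- the bridge across one `*`-edge of the `step ω`-walk. -/
lemma bridge {ω : Config} {c b rc rb : Site} (hcb : adjStar c b)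
    (gc : Good ω c rc) (gb : Good ω b rb) :
    Relation.ReflTransGen (SRel (Opn ω)) rc rb := by
  obtain ⟨hoc, gc2⟩ := gc
  obtain ⟨hob, gb2⟩ := gb
  rcases gc2 with rfl | ⟨hc, hs, hcc⟩
  · rcases gb2 with rfl | ⟨hc', hs', hbb⟩
    · exact Relation.ReflTransGen.single ⟨hcb, hob⟩
    · -- b is new, rc = c is an open *-neighbour of b
      exact L1 (amoc_of_new hc' hs') (adjStar_symm hcb) hbb hoc hob
  · rcases gb2 with rfl | ⟨hc', hs', hbb⟩
    · -- c is new, rb = b open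
      exact L1 (amoc_of_new hc hs) hcc hcb hoc hob
    · -- both new
      obtain ⟨s, hos, hs1, hs2⟩ := L2 hc hc' hs hs' hcb
      exact Relation.ReflTransGen.trans
        (L1 (amoc_of_new hc hs) hcc hs1 hoc hos)
        (L1 (amoc_of_new hc' hs') hs2 hbb hos hob)

lemma rtg_last_mem {S : Set Site} {a c : Site}
    (h : Relation.ReflTransGen (SRel S) a c) (ha : a ∈ S) : c ∈ S := by
  induction h with
  | refl => exact ha
  | tail _ h2 _ => exact h2.2

lemma walk_back {ω : Config} {a b : Site}
    (h : Relation.ReflTransGen (SRel (Opn (step ω))) a b) :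
    ∀ ra rb, Good ω a ra → Good ω b rb →
      Relation.ReflTransGen (SRel (Opn ω)) ra rb := by
  induction h with
  | refl => exact fun ra rb ga gb => good_conn ga gb
  | @tail c b hac hcb ih =>
    intro ra rb ga gb
    have hcopen : step ω c = true := rtg_last_mem hac (good_step_open ga)
    obtain ⟨rc, grc⟩ := exists_good (ω := ω) (z := c) hcopen
    exact Relation.ReflTransGen.trans (ih ra rc ga grc) (bridge hcb.1 grc gb)

/-- walk connectivity in a set. -/
def WConn (S : Set Site) (a b : Site) : Prop :=
  a ∈ S ∧ Relation.ReflTransGen (SRel S) a b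

lemma wconn_back_step {ω : Config} {a b : Site} (ha : ω a = true) (hb : ω b = true)
    (h : WConn (Opn (step ω)) a b) : WConn (Opn ω) a b :=
  ⟨ha, walk_back h.2 a b (good_self ha) (good_self hb)⟩

lemma wconn_back {ω : Config} {a b : Site} (ha : ω a = true) (hb : ω b = true) :
    ∀ n, WConn (Opn (evolve ω n)) a b → WConn (Opn ω) a b := by
  intro n
  induction n with
  | zero => exact id
  | succ n ih =>
    intro h
    exact ih (wconn_back_step (evolve_ge ha n) (evolve_ge hb n) h)

lemma wconn_mono {S T : Set Site} (hST : S ⊆ T) {a b : Site} (h : WConn S a b) :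
    WConn T a b := by
  refine ⟨hST h.1, ?_⟩
  exact Relation.ReflTransGen.mono (fun u v huv => ⟨huv.1, hST huv.2⟩) _ _ h.2

lemma wconn_final {ω : Config} {a b : Site}
    (h : WConn {z | finalOpen ω z} a b) : ∃ n, WConn (Opn (evolve ω n)) a b := by
  obtain ⟨ha, hr⟩ := h
  obtain ⟨n0, hn0⟩ := ha
  suffices hs : ∃ n, n0 ≤ n ∧ Relation.ReflTransGen (SRel (Opn (evolve ω n))) a b by
    obtain ⟨n, hn, hrr⟩ := hs
    exact ⟨n, evolve_le_evolve hn hn0, hrr⟩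
  clear hn0
  induction hr with
  | refl => exact ⟨n0, le_rfl, Relation.ReflTransGen.refl⟩
  | @tail c b hac hcb ih =>
    obtain ⟨n, hn, hrr⟩ := ih
    obtain ⟨m, hm⟩ := hcb.2
    refine ⟨max n m, le_trans hn (le_max_left n m), ?_⟩
    refine Relation.ReflTransGen.tail ?_ ⟨hcb.1, evolve_le_evolve (le_max_right n m) hm⟩
    exact Relation.ReflTransGen.mono
      (fun u v huv => ⟨huv.1, evolve_le_evolve (le_max_left n m) huv.2⟩) _ _ hrr
lemma connIn_to_wconn {S : Set Site} {a b : Site} (h : ConnIn S adjStar a b) :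
    WConn S a b := by
  obtain ⟨k, π, h0, hl, _, hch, hmem⟩ := h
  refine ⟨h0 ▸ hmem 0, ?_⟩
  have key : ∀ i : Fin (k + 1), Relation.ReflTransGen (SRel S) (π 0) (π i) := by
    intro i
    induction i using Fin.induction with
    | zero => exact Relation.ReflTransGen.refl
    | succ i ih => exact Relation.ReflTransGen.tail ih ⟨hch i, hmem i.succ⟩
  rw [← h0, ← hl]
  exact key (Fin.last k)

lemma wconn_to_connIn {S : Set Site} {a b : Site} (h : WConn S a b) :
    ConnIn S adjStar a b := by
  obtain ⟨ha, hr⟩ := h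
  induction hr with
  | refl =>
    exact ⟨0, fun _ => a, rfl, rfl, fun i1 i2 _ => Fin.ext (by omega),
      fun i => i.elim0, fun _ => ha⟩
  | @tail c b hac hcb ih =>
    obtain ⟨k, π, h0, hl, hinj, hch, hmem⟩ := ih
    by_cases hb : ∃ j : Fin (k + 1), π j = b
    · obtain ⟨j, hj⟩ := hb
      refine ⟨j.val, fun i => π ⟨i.val, by omega⟩, ?_, ?_, ?_, ?_, ?_⟩
      · rw [← h0]; rfl
      · rw [← hj]; congr 1
      · intro i1 i2 he
        have := hinj he
        rw [Fin.mk.injEq] at this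
        exact Fin.ext this
      · intro i
        have hik : i.val < k := by omega
        have := hch ⟨i.val, hik⟩
        convert this using 2 <;> rw [Fin.ext_iff] <;> simp [Fin.castSucc, Fin.succ]
      · intro i; exact hmem _
    · push_neg at hb
      refine ⟨k + 1, Fin.snoc π b, ?_, ?_, ?_, ?_, ?_⟩
      · rw [← h0]
        have : (0 : Fin (k + 2)) = Fin.castSucc 0 := rfl
        rw [this, Fin.snoc_castSucc]
      · exact Fin.snoc_last _ _
      · intro i1 i2 he
        by_cases e1 : i1 = Fin.last (k + 1) <;> by_cases e2 : i2 = Fin.last (k + 1)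
        · rw [e1, e2]
        · obtain ⟨j2, rfl⟩ := Fin.exists_castSucc_eq.2 e2
          rw [e1, Fin.snoc_last, Fin.snoc_castSucc] at he
          exact absurd he.symm (hb j2)
        · obtain ⟨j1, rfl⟩ := Fin.exists_castSucc_eq.2 e1
          rw [e2, Fin.snoc_last, Fin.snoc_castSucc] at he
          exact absurd he (hb j1)
        · obtain ⟨j1, rfl⟩ := Fin.exists_castSucc_eq.2 e1
          obtain ⟨j2, rfl⟩ := Fin.exists_castSucc_eq.2 e2
          rw [Fin.snoc_castSucc, Fin.snoc_castSucc] at he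
          rw [hinj he]
      · intro i
        induction i using Fin.lastCases with
        | last =>
          rw [Fin.succ_last, Fin.snoc_last, Fin.snoc_castSucc, hl]
          exact hcb.1
        | cast j =>
          rw [Fin.succ_castSucc, Fin.snoc_castSucc, Fin.snoc_castSucc]
          exact hch j
      · intro i
        induction i using Fin.lastCases with
        | last => rw [Fin.snoc_last]; exact hcb.2
        | cast j => rw [Fin.snoc_castSucc]; exact hmem j
-- combinatorial summary
lemma conn_back {ω : Config} {a b : Site} (ha : ω a = true) (hb : ω b = true) {n : ℕ}
    (h : ConnIn (Opn (evolve ω n)) adjStar a b) : ConnIn (Opn ω) adjStar a b :=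
  wconn_to_connIn (wconn_back ha hb n (connIn_to_wconn h))

lemma conn_back_final {ω : Config} {a b : Site} (ha : ω a = true) (hb : ω b = true)
    (h : ConnIn {z | finalOpen ω z} adjStar a b) : ConnIn (Opn ω) adjStar a b := by
  obtain ⟨n, hn⟩ := wconn_final (connIn_to_wconn h)
  exact wconn_to_connIn (wconn_back ha hb n hn)

-- measure theory
def Cyl (t : Finset Site) (η : Site → Bool) : Set Config := {ω | ∀ z ∈ t, ω z = η z}

def Cyls : Set (Set Config) := {S | ∃ t η, S = Cyl t η}

lemma measurableSet_cyl (t : Finset Site) (η : Site → Bool) : MeasurableSet (Cyl t η) := by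
  have : Cyl t η = ⋂ z ∈ t, {ω : Config | ω z = η z} := by
    ext ω; simp [Cyl]
  rw [this]
  refine MeasurableSet.biInter t.countable_toSet fun z _ => ?_
  show MeasurableSet ((fun ω : Config => ω z) ⁻¹' {η z})
  exact (measurable_pi_apply z) (MeasurableSet.singleton (η z))

lemma generateFrom_cyls : MeasurableSpace.generateFrom Cyls = (inferInstance : MeasurableSpace Config) := by
  refine le_antisymm ?_ ?_
  · refine MeasurableSpace.generateFrom_le ?_
    rintro S ⟨t, η, rfl⟩
    exact measurableSet_cyl t η
  · show MeasurableSpace.pi ≤ _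
    refine iSup_le fun z => ?_
    intro S hS
    obtain ⟨s', -, rfl⟩ := hS
    have he : (fun ω : Config => ω z) ⁻¹' s' = ⋃ b ∈ s', Cyl {z} (fun _ => b) := by
      ext ω
      simp only [Set.mem_preimage, Set.mem_iUnion, Cyl, Finset.mem_singleton, Set.mem_setOf_eq]
      constructor
      · intro h; exact ⟨ω z, h, fun w hw => by rw [hw]⟩
      · rintro ⟨b, hb, h⟩; have hz := h z rfl; rwa [hz]
    rw [he]
    exact MeasurableSet.biUnion (Set.to_countable _)
      fun b _ => MeasurableSpace.measurableSet_generateFrom ⟨{z}, fun _ => b, rfl⟩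

lemma isPiSystem_cyls : IsPiSystem Cyls := by
  rintro S1 ⟨t1, η1, rfl⟩ S2 ⟨t2, η2, rfl⟩ hne
  obtain ⟨ω0, h1, h2⟩ := hne
  refine ⟨t1 ∪ t2, fun z => if z ∈ t1 then η1 z else η2 z, ?_⟩
  ext ω
  simp only [Cyl, Set.mem_inter_iff, Set.mem_setOf_eq, Finset.mem_union]
  constructor
  · rintro ⟨g1, g2⟩ z hz
    by_cases hzt : z ∈ t1
    · rw [if_pos hzt]; exact g1 z hzt
    · rw [if_neg hzt]; exact g2 z (by tauto)
  · intro g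
    constructor
    · intro z hz
      have := g z (Or.inl hz)
      rwa [if_pos hz] at this
    · intro z hz
      by_cases hzt : z ∈ t1
      · have := g z (Or.inl hzt)
        rw [if_pos hzt] at this
        rw [this, ← h1 z hzt, h2 z hz]
      · have := g z (Or.inr hz)
        rwa [if_neg hzt] at this
/-- forcing the sites of `s` to be open. -/
def force (s : Finset Site) (ω : Config) : Config := fun z => if z ∈ s then true else ω z

lemma measurable_force (s : Finset Site) : Measurable (force s) := by
  refine measurable_pi_lambda _ fun z => ?_
  by_cases hz : z ∈ s
  · simp only [force, if_pos hz]; exact measurable_const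
  · simp only [force, if_neg hz]; exact measurable_pi_apply z

/-- the event that all sites of `s` are open. -/
def AllOpen (s : Finset Site) : Set Config := {ω | ∀ z ∈ s, ω z = true}

lemma allOpen_eq_cyl (s : Finset Site) : AllOpen s = Cyl s (fun _ => true) := rfl

lemma measure_allOpen {p : ℝ} {μ : Measure Config} (hb : IsBernoulli p μ) (hp0 : 0 ≤ p)
    (s : Finset Site) : μ (AllOpen s) = ENNReal.ofReal (p ^ s.card) := by
  have := hb s (fun _ => true)
  rw [show {ω : Config | ∀ x ∈ s, ω x = (fun _ => true) x} = AllOpen s from rfl] at this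
  rw [this]
  simp only [if_pos]
  rw [Finset.prod_const, ← ENNReal.ofReal_pow hp0]

lemma indep_key {p : ℝ} {μ : Measure Config} [IsProbabilityMeasure μ]
    (hb : IsBernoulli p μ) (hp0 : 0 ≤ p) (s : Finset Site)
    {A : Set Config} (hA : MeasurableSet A) :
    μ (force s ⁻¹' A ∩ AllOpen s) = ENNReal.ofReal (p ^ s.card) * μ (force s ⁻¹' A) := by
  classical
  set c : ENNReal := ENNReal.ofReal (p ^ s.card) with hc
  set ν₁ : Measure Config := (μ.restrict (AllOpen s)).map (force s) with hν₁
  set ν₂ : Measure Config := c • μ.map (force s) with hν₂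
  have hmE : MeasurableSet (AllOpen s) := by rw [allOpen_eq_cyl]; exact measurableSet_cyl _ _
  have hg := measurable_force s
  have happly₁ : ∀ B : Set Config, MeasurableSet B → ν₁ B = μ (force s ⁻¹' B ∩ AllOpen s) := by
    intro B hB
    rw [hν₁, Measure.map_apply hg hB, Measure.restrict_apply (hg hB)]
  have happly₂ : ∀ B : Set Config, MeasurableSet B → ν₂ B = c * μ (force s ⁻¹' B) := by
    intro B hB
    rw [hν₂, Measure.smul_apply, Measure.map_apply hg hB, smul_eq_mul]
  haveI hfin1 : IsFiniteMeasure ν₁ := by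
    constructor
    rw [happly₁ Set.univ MeasurableSet.univ]
    exact lt_of_le_of_lt (measure_mono (Set.subset_univ _)) (measure_lt_top μ _)
  haveI hfin2 : IsFiniteMeasure ν₂ := by
    constructor
    rw [happly₂ Set.univ MeasurableSet.univ]
    refine ENNReal.mul_lt_top ?_ ?_
    · exact ENNReal.ofReal_lt_top
    · exact lt_of_le_of_lt (measure_mono (Set.subset_univ _)) (measure_lt_top μ _)
  have hbc : ∀ (t : Finset Site) (η : Site → Bool),
      μ (Cyl t η) = ∏ z ∈ t, ENNReal.ofReal (if η z then p else 1 - p) :=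
    fun t η => hb t η
  have hext : ν₁ = ν₂ := by
    refine MeasureTheory.ext_of_generate_finite Cyls generateFrom_cyls.symm isPiSystem_cyls ?_ ?_
    · rintro S ⟨t, η, rfl⟩
      rw [happly₁ _ (measurableSet_cyl t η), happly₂ _ (measurableSet_cyl t η)]
      by_cases hcomp : ∀ z ∈ t, z ∈ s → η z = true
      · have hpre : force s ⁻¹' Cyl t η = Cyl (t \ s) η := by
          ext ω
          simp only [Set.mem_preimage, Cyl, Set.mem_setOf_eq, Finset.mem_sdiff, force]
          constructor
          · intro h z hz
            have := h z hz.1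
            rwa [if_neg hz.2] at this
          · intro h z hz
            by_cases hzs : z ∈ s
            · rw [if_pos hzs]; exact (hcomp z hz hzs).symm
            · rw [if_neg hzs]; exact h z ⟨hz, hzs⟩
        have hinter : Cyl (t \ s) η ∩ AllOpen s = Cyl ((t \ s) ∪ s)
            (fun z => if z ∈ s then true else η z) := by
          ext ω
          simp only [Cyl, AllOpen, Set.mem_inter_iff, Set.mem_setOf_eq, Finset.mem_union,
            Finset.mem_sdiff]
          constructor
          · rintro ⟨h1, h2⟩ z hz
            by_cases hzs : z ∈ s
            · rw [if_pos hzs]; exact h2 z hzs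
            · rw [if_neg hzs]
              rcases hz with hz | hz
              · exact h1 z hz
              · exact absurd hz hzs
          · intro h
            constructor
            · intro z hz
              have := h z (Or.inl hz)
              rwa [if_neg hz.2] at this
            · intro z hz
              have := h z (Or.inr hz)
              rwa [if_pos hz] at this
        rw [hpre, hinter, hbc ((t \ s) ∪ s) _, hbc (t \ s) η]
        rw [Finset.prod_union (Finset.sdiff_disjoint)]
        have e1 : ∏ z ∈ t \ s, ENNReal.ofReal (if (if z ∈ s then true else η z) then p else 1 - p)
            = ∏ z ∈ t \ s, ENNReal.ofReal (if η z then p else 1 - p) := by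
          refine Finset.prod_congr rfl fun z hz => ?_
          rw [if_neg (Finset.mem_sdiff.1 hz).2]
        have e2 : ∏ z ∈ s, ENNReal.ofReal (if (if z ∈ s then true else η z) then p else 1 - p)
            = ENNReal.ofReal (p ^ s.card) := by
          rw [ENNReal.ofReal_pow hp0, ← Finset.prod_const]
          refine Finset.prod_congr rfl fun z hz => ?_
          rw [if_pos (by rw [if_pos hz])]
        rw [e1, e2, mul_comm]
      · push_neg at hcomp
        obtain ⟨z0, hz0t, hz0s, hz0⟩ := hcomp
        have hz0' : η z0 = false := by simpa using hz0
        have hpre : force s ⁻¹' Cyl t η = (∅ : Set Config) := by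
          ext ω
          simp only [Set.mem_preimage, Cyl, Set.mem_setOf_eq, Set.mem_empty_iff_false,
            iff_false]
          intro h
          have h2 := h z0 hz0t
          rw [force] at h2
          simp only [if_pos hz0s, hz0'] at h2
          exact absurd h2 (by simp)
        rw [hpre]
        simp
    · rw [happly₁ _ MeasurableSet.univ, happly₂ _ MeasurableSet.univ]
      have : force s ⁻¹' Set.univ = Set.univ := rfl
      rw [this, Set.univ_inter, measure_allOpen hb hp0 s, measure_univ, mul_one]
  have := congrArg (fun ν : Measure Config => ν A) hext
  rw [happly₁ A hA, happly₂ A hA] at this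
  exact this
lemma connIn_mono {S T : Set Site} (hST : S ⊆ T) {a b : Site}
    (h : ConnIn S adjStar a b) : ConnIn T adjStar a b := by
  obtain ⟨k, π, h0, hl, hinj, hch, hmem⟩ := h
  exact ⟨k, π, h0, hl, hinj, hch, fun i => hST (hmem i)⟩

lemma measurable_connEvent (a b : Site) :
    MeasurableSet {ω : Config | ConnIn (Opn ω) adjStar a b} := by
  have he : {ω : Config | ConnIn (Opn ω) adjStar a b} =
      ⋃ (k : ℕ), ⋃ (π : Fin (k + 1) → Site),
        ⋃ (_ : π 0 = a ∧ π (Fin.last k) = b ∧ Function.Injective π ∧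
          ∀ i : Fin k, adjStar (π i.castSucc) (π i.succ)),
        ⋂ i, {ω : Config | ω (π i) = true} := by
    ext ω
    simp only [Set.mem_setOf_eq, Set.mem_iUnion, Set.mem_iInter, ConnIn, IsPathIn, Opn]
    constructor
    · rintro ⟨k, π, h0, hl, hinj, hch, hmem⟩
      exact ⟨k, π, ⟨h0, hl, hinj, hch⟩, hmem⟩
    · rintro ⟨k, π, ⟨h0, hl, hinj, hch⟩, hmem⟩
      exact ⟨k, π, h0, hl, hinj, hch, hmem⟩
  rw [he]
  refine MeasurableSet.iUnion fun k => MeasurableSet.iUnion fun π => ?_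
  refine MeasurableSet.iUnion fun _ => MeasurableSet.iInter fun i => ?_
  show MeasurableSet ((fun ω : Config => ω (π i)) ⁻¹' {true})
  exact (measurable_pi_apply (π i)) (MeasurableSet.singleton true)

lemma upper_bound {p : ℝ} {μ : Measure Config} [IsProbabilityMeasure μ]
    (hb : IsBernoulli p μ) (hp : 0 < p) (hp1 : p ≤ 1) {a b : Site} (A : Set Config)
    (hAB : ∀ ω ∈ A, force {a, b} ω ∈ {ω : Config | ConnIn (Opn ω) adjStar a b}) :
    μ A ≤ ENNReal.ofReal (p ^ (-(2:ℝ))) * μ {ω : Config | ConnIn (Opn ω) adjStar a b} := by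
  classical
  set s : Finset Site := {a, b} with hs
  set A0 : Set Config := {ω : Config | ConnIn (Opn ω) adjStar a b} with hA0
  have h1 : A ⊆ force s ⁻¹' A0 := fun ω hω => hAB ω hω
  have key := indep_key hb hp.le s (measurable_connEvent a b)
  have h2 : force s ⁻¹' A0 ∩ AllOpen s ⊆ A0 := by
    rintro ω ⟨hf, hall⟩
    have he : force s ω = ω := by
      funext z
      by_cases hz : z ∈ s
      · rw [force, if_pos hz, hall z hz]
      · rw [force, if_neg hz]
    rwa [Set.mem_preimage, he] at hf
  have hcard : s.card ≤ 2 := by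
    refine le_trans (Finset.card_insert_le _ _) ?_
    simp
  set c : ENNReal := ENNReal.ofReal (p ^ s.card) with hc
  have hc0 : c ≠ 0 := by
    rw [hc]
    simp only [ne_eq, ENNReal.ofReal_eq_zero, not_le]
    exact pow_pos hp _
  have hctop : c ≠ ⊤ := ENNReal.ofReal_ne_top
  have h3 : c * μ (force s ⁻¹' A0) ≤ μ A0 := by
    rw [← key]; exact measure_mono h2
  have h4 : μ (force s ⁻¹' A0) ≤ c⁻¹ * μ A0 := by
    have := mul_le_mul_right h3 c⁻¹
    rwa [← mul_assoc, ENNReal.inv_mul_cancel hc0 hctop, one_mul] at this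
  have h5 : c⁻¹ ≤ ENNReal.ofReal (p ^ (-(2:ℝ))) := by
    rw [hc, ← ENNReal.ofReal_inv_of_pos (pow_pos hp _)]
    refine ENNReal.ofReal_le_ofReal ?_
    have e1 : (p ^ s.card)⁻¹ = p ^ (-(s.card:ℝ)) := by
      rw [Real.rpow_neg hp.le, Real.rpow_natCast]
    rw [e1]
    refine Real.rpow_le_rpow_of_exponent_ge hp hp1 ?_
    have : (s.card : ℝ) ≤ 2 := by exact_mod_cast hcard
    linarith
  calc μ A ≤ μ (force s ⁻¹' A0) := measure_mono h1
    _ ≤ c⁻¹ * μ A0 := h4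
    _ ≤ ENNReal.ofReal (p ^ (-(2:ℝ))) * μ A0 := mul_le_mul_left h5 _

/-- There is a constant `c₂` such that for `p ∈ (0, p_c^*]`, every `x` and every
`n ∈ [1,∞]`, the two-point `*`-connectivity functions satisfy
`τ_p(x) ≤ τ_{p,n}(x) ≤ p^{-c₂} τ_p(x)`. -/
theorem tau_sandwich :
    ∃ c2 : ℝ, ∀ (p : ℝ), 0 < p → p ≤ 1 - pc →
      ∀ (μ : Measure Config), IsProbabilityMeasure μ → IsBernoulli p μ →
      ∀ x : Site,
      (∀ n : ℕ, 1 ≤ n →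
        μ {ω : Config | ConnIn {z | ω z = true} adjStar (0, 0) x}
          ≤ μ {ω : Config | ConnIn {z | evolve ω n z = true} adjStar (0, 0) x}
        ∧ μ {ω : Config | ConnIn {z | evolve ω n z = true} adjStar (0, 0) x}
          ≤ ENNReal.ofReal (p ^ (-c2))
              * μ {ω : Config | ConnIn {z | ω z = true} adjStar (0, 0) x})
      ∧ (μ {ω : Config | ConnIn {z | ω z = true} adjStar (0, 0) x}
          ≤ μ {ω : Config | ConnIn {z | finalOpen ω z} adjStar (0, 0) x}
        ∧ μ {ω : Config | ConnIn {z | finalOpen ω z} adjStar (0, 0) x}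
          ≤ ENNReal.ofReal (p ^ (-c2))
              * μ {ω : Config | ConnIn {z | ω z = true} adjStar (0, 0) x}) := by
  
  classical
  refine ⟨2, fun p hp hple μ hprob hbern x => ?_⟩
  have hpc : 0 ≤ pc := by
    refine Real.sInf_nonneg ?_
    rintro q ⟨hq, -⟩
    exact hq.1
  have hp1 : p ≤ 1 := by linarith
  set o : Site := (0, 0) with ho
  set A0 : Set Config := {ω : Config | ConnIn (Opn ω) adjStar o x} with hA0
  -- lower bounds
  have hlow : ∀ (S : Config → Set Site), (∀ ω, Opn ω ⊆ S ω) →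
      μ A0 ≤ μ {ω : Config | ConnIn (S ω) adjStar o x} := by
    intro S hS
    refine measure_mono fun ω hω => ?_
    exact connIn_mono (hS ω) hω
  -- upper bounds via upper_bound
  have hforce_o : ∀ ω : Config, force {o, x} ω o = true := by
    intro ω; rw [force, if_pos (Finset.mem_insert_self _ _)]
  have hforce_x : ∀ ω : Config, force {o, x} ω x = true := by
    intro ω
    rw [force, if_pos (Finset.mem_insert_of_mem (Finset.mem_singleton_self _))]
  have hforce_ge : ∀ (ω : Config) (z : Site), ω z = true → force {o, x} ω z = true := by
    intro ω z hz
    rw [force]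
    by_cases h : z ∈ ({o, x} : Finset Site)
    · rw [if_pos h]
    · rw [if_neg h]; exact hz
  constructor
  · intro n _
    constructor
    · exact hlow (fun ω => {z | evolve ω n z = true}) (fun ω z hz => evolve_ge hz n)
    · refine upper_bound hbern hp hp1 _ ?_
      intro ω hω
      have h1 : ConnIn (Opn (evolve (force {o, x} ω) n)) adjStar o x := by
        refine connIn_mono ?_ hω
        intro z hz
        exact evolve_mono (hforce_ge ω) n z hz
      exact conn_back (hforce_o ω) (hforce_x ω) h1
  · constructor
    · refine hlow (fun ω => {z | finalOpen ω z}) (fun ω z hz => ⟨0, hz⟩)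
    · refine upper_bound hbern hp hp1 _ ?_
      intro ω hω
      have h1 : ConnIn {z | finalOpen (force {o, x} ω) z} adjStar o x := by
        refine connIn_mono ?_ hω
        rintro z ⟨n, hn⟩
        exact ⟨n, evolve_mono (hforce_ge ω) n z hn⟩
      exact conn_back_final (hforce_o ω) (hforce_x ω) h1
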